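/- Let p ≥ 1 be an integer. There exists a constant C ≥ 0 depending only on p such that for every integer k ≥ 2p, |C(k,p)^{-2}·C(k,2p−1)·C(2p−1,p)·p − p²/k + p²(p−1)²/k²| ≤ C/k³, where C(a,b) denotes the binomial coefficient. Equivalently, C(k,p)^{-2} C(k,2p−1) C(2p−1,p) p = (p²/k)·∏_{i=1}^{p−1}(1 − (p−1)/(k−i)) = p²/k − p²(p−1)²/k² + O(1/k³). -/

import Mathlib

open Finset

lemma aux_prod_est {ι : Type*} (s : Finset ι) (x : ι → ℝ) :
    |∏ i ∈ s, (1 + x i) - 1 - ∑ i ∈ s, x i| ≤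
      (∑ i ∈ s, |x i|) ^ 2 * ∏ i ∈ s, (1 + |x i|) := by
  classical
  induction s using Finset.induction with
  | empty => simp
  | @insert a t ha ih =>
    rw [Finset.prod_insert ha, Finset.sum_insert ha, Finset.sum_insert ha,
      Finset.prod_insert ha]
    set P := ∏ i ∈ t, (1 + x i)
    set S := ∑ i ∈ t, x i
    set A := ∑ i ∈ t, |x i|
    set B := ∏ i ∈ t, (1 + |x i|)
    have hA : 0 ≤ A := Finset.sum_nonneg fun i _ => abs_nonneg _
    have hB : 1 ≤ B := by
      have := Finset.prod_le_prod (s := t) (f := fun _ => (1:ℝ))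
        (g := fun i => 1 + |x i|) (fun i _ => zero_le_one)
        (fun i _ => le_add_of_nonneg_right (abs_nonneg _))
      simpa using this
    have hS : |S| ≤ A := Finset.abs_sum_le_sum_abs _ _
    have key : (1 + x a) * P - 1 - (x a + S) = (P - 1 - S) + x a * (P - 1) := by ring
    have h1 : |P - 1| ≤ A ^ 2 * B + A := by
      calc |P - 1| ≤ |P - 1 - S| + |S| := by
            have := abs_add_le (P - 1 - S) S; simpa using this
        _ ≤ A ^ 2 * B + A := add_le_add ih hS
    have hxa : (0:ℝ) ≤ |x a| := abs_nonneg _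
    calc |(1 + x a) * P - 1 - (x a + S)| = |(P - 1 - S) + x a * (P - 1)| := by rw [key]
      _ ≤ |P - 1 - S| + |x a| * |P - 1| := by
          refine (abs_add_le _ _).trans ?_
          rw [abs_mul]
      _ ≤ (A ^ 2 * B) + |x a| * (A ^ 2 * B + A) := by
          refine add_le_add ih ?_
          exact mul_le_mul_of_nonneg_left h1 hxa
      _ ≤ (|x a| + A) ^ 2 * ((1 + |x a|) * B) := by
          have hB0 : (0:ℝ) ≤ B := le_trans zero_le_one hB
          have t1 : 0 ≤ |x a| * A * (2 * B - 1) :=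
            mul_nonneg (mul_nonneg hxa hA) (by linarith)
          have t2 : 0 ≤ |x a| ^ 2 * B := mul_nonneg (sq_nonneg _) hB0
          have t3 : 0 ≤ A * (|x a| ^ 2 * B) := mul_nonneg hA t2
          have t4 : 0 ≤ |x a| * (|x a| ^ 2 * B) := mul_nonneg hxa t2
          nlinarith [t1, t2, t3, t4]

lemma cast_descFactorial_prod {n m : ℕ} (h : m ≤ n) :
    ((n.descFactorial m : ℕ) : ℝ) = ∏ i ∈ Finset.range m, ((n : ℝ) - i) := by
  rw [Nat.descFactorial_eq_prod_range, Nat.cast_prod]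
  exact Finset.prod_congr rfl fun i hi =>
    Nat.cast_sub (le_trans (le_of_lt (Finset.mem_range.mp hi)) h)

lemma ident (p k : ℕ) (hp : 1 ≤ p) (hk : 2 * p ≤ k) :
    ((k.choose p : ℝ) ^ 2)⁻¹ * (k.choose (2 * p - 1) : ℝ) *
        ((2 * p - 1).choose p : ℝ) * (p : ℝ)
      = (p : ℝ) ^ 2 * ((k - p).descFactorial (p - 1) : ℝ) / (k.descFactorial p : ℝ) := by
  have hpk : p ≤ k := by omega
  have h2pk : 2 * p - 1 ≤ k := by omega
  have hp2p : p ≤ 2 * p - 1 := by omega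
  rw [Nat.cast_choose ℝ hpk, Nat.cast_choose ℝ h2pk, Nat.cast_choose ℝ hp2p]
  have e1 : 2 * p - 1 - p = p - 1 := by omega
  have e2 : k - (2 * p - 1) = k - p - (p - 1) := by omega
  rw [e1, e2]
  have h1 : ((k - p).factorial : ℝ) * (k.descFactorial p : ℝ) = (k.factorial : ℝ) := by
    rw_mod_cast [Nat.factorial_mul_descFactorial hpk]
  have h2 : ((k - p - (p - 1)).factorial : ℝ) * ((k - p).descFactorial (p - 1) : ℝ)
      = ((k - p).factorial : ℝ) := by
    rw_mod_cast [Nat.factorial_mul_descFactorial (show p - 1 ≤ k - p by omega)]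
  have h3 : (p.factorial : ℝ) = (p : ℝ) * ((p - 1).factorial : ℝ) := by
    obtain ⟨q, rfl⟩ : ∃ q, p = q + 1 := ⟨p - 1, by omega⟩
    push_cast [Nat.factorial_succ]
    ring
  have n1 : (k.factorial : ℝ) ≠ 0 := Nat.cast_ne_zero.2 (Nat.factorial_ne_zero _)
  have n2 : (p.factorial : ℝ) ≠ 0 := Nat.cast_ne_zero.2 (Nat.factorial_ne_zero _)
  have n3 : ((k - p).factorial : ℝ) ≠ 0 := Nat.cast_ne_zero.2 (Nat.factorial_ne_zero _)
  have n4 : ((p - 1).factorial : ℝ) ≠ 0 := Nat.cast_ne_zero.2 (Nat.factorial_ne_zero _)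
  have n5 : ((2 * p - 1).factorial : ℝ) ≠ 0 := Nat.cast_ne_zero.2 (Nat.factorial_ne_zero _)
  have n6 : ((k - p - (p - 1)).factorial : ℝ) ≠ 0 := Nat.cast_ne_zero.2 (Nat.factorial_ne_zero _)
  have n7 : (k.descFactorial p : ℝ) ≠ 0 := by
    rw [Nat.cast_ne_zero]
    intro h
    exact absurd (Nat.descFactorial_eq_zero_iff_lt.mp h) (not_lt.mpr hpk)
  have n8 : ((k - p).descFactorial (p - 1) : ℝ) ≠ 0 := by
    rw [Nat.cast_ne_zero]
    intro h
    have := Nat.descFactorial_eq_zero_iff_lt.mp h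
    omega
  rw [← h1, ← h2, h3]
  field_simp

theorem stmt17 (p : ℕ) (hp : 1 ≤ p) :
    ∃ C : ℝ, 0 ≤ C ∧ ∀ k : ℕ, 2 * p ≤ k →
      |((k.choose p : ℝ) ^ 2)⁻¹ * (k.choose (2 * p - 1) : ℝ) *
            ((2 * p - 1).choose p : ℝ) * (p : ℝ)
          - (p : ℝ) ^ 2 / k
          + (p : ℝ) ^ 2 * ((p : ℝ) - 1) ^ 2 / (k : ℝ) ^ 2|
        ≤ C / (k : ℝ) ^ 3 := by
  obtain ⟨q, rfl⟩ : ∃ q, p = q + 1 := ⟨p - 1, by omega⟩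
  have hq0 : (0:ℝ) ≤ (q:ℝ) := Nat.cast_nonneg q
  refine ⟨((q:ℝ) + 1) ^ 2 * (4 * (q:ℝ) ^ 4 * 2 ^ q + 2 * (q:ℝ) ^ 3), by positivity, ?_⟩
  intro k hk
  set K : ℝ := (k:ℝ) with hKdef
  have hK2 : 2 * (q:ℝ) + 2 ≤ K := by
    have : ((2 * (q + 1) : ℕ) : ℝ) ≤ K := Nat.cast_le.mpr hk
    push_cast at this; linarith
  have hK0 : (0:ℝ) < K := by linarith
  set x : ℕ → ℝ := fun i => -(q:ℝ) / (K - 1 - i) with hxdef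
  -- per-index facts
  have hiq : ∀ i ∈ Finset.range q, (i:ℝ) + 1 ≤ (q:ℝ) := by
    intro i hi
    have : i + 1 ≤ q := Finset.mem_range.mp hi
    exact_mod_cast Nat.cast_le.mpr this
  have hden : ∀ i ∈ Finset.range q, (q:ℝ) + 2 ≤ K - 1 - i := by
    intro i hi; have := hiq i hi; linarith
  have hdenpos : ∀ i ∈ Finset.range q, (0:ℝ) < K - 1 - i := by
    intro i hi; have := hden i hi; linarith
  have hhalf : ∀ i ∈ Finset.range q, K / 2 ≤ K - 1 - i := by
    intro i hi; have := hiq i hi; linarith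
  have habs : ∀ i ∈ Finset.range q, |x i| = (q:ℝ) / (K - 1 - i) := by
    intro i hi
    rw [hxdef]
    rw [abs_div, abs_neg, abs_of_nonneg hq0, abs_of_pos (hdenpos i hi)]
  have hx1 : ∀ i ∈ Finset.range q, |x i| ≤ 1 := by
    intro i hi
    rw [habs i hi, div_le_one (hdenpos i hi)]
    have := hden i hi; linarith
  have hx2 : ∀ i ∈ Finset.range q, |x i| ≤ 2 * (q:ℝ) / K := by
    intro i hi
    rw [habs i hi, div_le_div_iff₀ (hdenpos i hi) hK0]
    have h1 := hhalf i hi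
    nlinarith [mul_le_mul_of_nonneg_left h1 hq0]
  have hterm : ∀ i ∈ Finset.range q, |x i + (q:ℝ) / K| ≤ 2 * (q:ℝ) ^ 2 / K ^ 2 := by
    intro i hi
    have hd := hdenpos i hi
    have e : x i + (q:ℝ) / K = -((q:ℝ) * ((i:ℝ) + 1) / (K * (K - 1 - i))) := by
      rw [hxdef]; field_simp; ring
    rw [e, abs_neg, abs_of_nonneg (by positivity)]
    rw [div_le_div_iff₀ (by positivity) (by positivity)]
    have h1 := hhalf i hi
    have h2 := hiq i hi
    nlinarith [mul_le_mul_of_nonneg_right (mul_le_mul_of_nonneg_left h2 hq0) (sq_nonneg K),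
      mul_le_mul_of_nonneg_left (mul_le_mul_of_nonneg_left h1 hK0.le)
        (mul_nonneg (mul_nonneg (by norm_num : (0:ℝ) ≤ 2) hq0) hq0)]
  set S : ℝ := ∑ i ∈ Finset.range q, x i with hSdef
  set A : ℝ := ∑ i ∈ Finset.range q, |x i| with hAdef
  set B : ℝ := ∏ i ∈ Finset.range q, (1 + |x i|) with hBdef
  have hA0 : 0 ≤ A := Finset.sum_nonneg fun i _ => abs_nonneg _
  have hB0 : 0 ≤ B := Finset.prod_nonneg fun i _ => by
    have := abs_nonneg (x i); linarith
  have hA : A ≤ 2 * (q:ℝ) ^ 2 / K := by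
    calc A ≤ ∑ _i ∈ Finset.range q, (2 * (q:ℝ) / K) := Finset.sum_le_sum hx2
      _ = (q:ℝ) * (2 * (q:ℝ) / K) := by
          rw [Finset.sum_const, Finset.card_range, nsmul_eq_mul]
      _ = 2 * (q:ℝ) ^ 2 / K := by ring
  have hB : B ≤ 2 ^ q := by
    calc B ≤ ∏ _i ∈ Finset.range q, (2:ℝ) := by
          refine Finset.prod_le_prod (fun i _ => by positivity) (fun i hi => ?_)
          have := hx1 i hi; linarith
      _ = 2 ^ q := by rw [Finset.prod_const, Finset.card_range]
  have hSbound : |S + (q:ℝ) ^ 2 / K| ≤ 2 * (q:ℝ) ^ 3 / K ^ 2 := by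
    have e : S + (q:ℝ) ^ 2 / K = ∑ i ∈ Finset.range q, (x i + (q:ℝ) / K) := by
      rw [Finset.sum_add_distrib, Finset.sum_const, Finset.card_range, nsmul_eq_mul, hSdef]
      ring
    rw [e]
    calc |∑ i ∈ Finset.range q, (x i + (q:ℝ) / K)|
        ≤ ∑ i ∈ Finset.range q, |x i + (q:ℝ) / K| := Finset.abs_sum_le_sum_abs _ _
      _ ≤ ∑ _i ∈ Finset.range q, (2 * (q:ℝ) ^ 2 / K ^ 2) := Finset.sum_le_sum hterm
      _ = (q:ℝ) * (2 * (q:ℝ) ^ 2 / K ^ 2) := by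
          rw [Finset.sum_const, Finset.card_range, nsmul_eq_mul]
      _ = 2 * (q:ℝ) ^ 3 / K ^ 2 := by ring
  -- the product identity
  have hprodD : (0:ℝ) < ∏ i ∈ Finset.range q, (K - 1 - i) :=
    Finset.prod_pos hdenpos
  have hprod : ((k.choose (q + 1) : ℝ) ^ 2)⁻¹ * (k.choose (2 * (q + 1) - 1) : ℝ) *
        ((2 * (q + 1) - 1).choose (q + 1) : ℝ) * ((q + 1 : ℕ) : ℝ)
      = ((q:ℝ) + 1) ^ 2 / K * ∏ i ∈ Finset.range q, (1 + x i) := by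
    rw [ident (q + 1) k (by omega) hk]
    have hDN : (((k - (q + 1)).descFactorial ((q + 1) - 1) : ℕ) : ℝ)
        = ∏ i ∈ Finset.range q, (K - ((q:ℝ) + 1) - i) := by
      rw [show (q + 1) - 1 = q from rfl,
        cast_descFactorial_prod (show q ≤ k - (q + 1) by omega)]
      refine Finset.prod_congr rfl fun i hi => ?_
      rw [Nat.cast_sub (show q + 1 ≤ k by omega)]
      push_cast; ring
    have hDk : ((k.descFactorial (q + 1) : ℕ) : ℝ)
        = K * ∏ i ∈ Finset.range q, (K - 1 - i) := by
      rw [cast_descFactorial_prod (show q + 1 ≤ k by omega),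
        Finset.prod_range_succ']
      simp only [Nat.cast_zero, sub_zero]
      rw [mul_comm]
      congr 1
      refine Finset.prod_congr rfl fun i hi => ?_
      push_cast; ring
    rw [hDN, hDk]
    have hfac : ∀ i ∈ Finset.range q, K - ((q:ℝ) + 1) - i = (1 + x i) * (K - 1 - i) := by
      intro i hi
      have hd := hdenpos i hi
      rw [hxdef]
      field_simp
      ring
    rw [Finset.prod_congr rfl hfac, Finset.prod_mul_distrib]
    push_cast
    field_simp
  rw [hprod]
  have hq1 : ((q:ℝ) + 1) - 1 = (q:ℝ) := by ring
  push_cast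
  have factored : ((q:ℝ) + 1) ^ 2 / K * (∏ i ∈ Finset.range q, (1 + x i))
        - ((q:ℝ) + 1) ^ 2 / K + ((q:ℝ) + 1) ^ 2 * ((q:ℝ) + 1 - 1) ^ 2 / K ^ 2
      = ((q:ℝ) + 1) ^ 2 / K *
        ((∏ i ∈ Finset.range q, (1 + x i)) - 1 + (q:ℝ) ^ 2 / K) := by
    field_simp
    ring
  rw [factored, abs_mul, abs_of_nonneg (by positivity : (0:ℝ) ≤ ((q:ℝ) + 1) ^ 2 / K)]
  have hmid : |(∏ i ∈ Finset.range q, (1 + x i)) - 1 + (q:ℝ) ^ 2 / K|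
      ≤ (4 * (q:ℝ) ^ 4 * 2 ^ q + 2 * (q:ℝ) ^ 3) / K ^ 2 := by
    have tri : |(∏ i ∈ Finset.range q, (1 + x i)) - 1 + (q:ℝ) ^ 2 / K|
        ≤ |(∏ i ∈ Finset.range q, (1 + x i)) - 1 - S| + |S + (q:ℝ) ^ 2 / K| := by
      have e : (∏ i ∈ Finset.range q, (1 + x i)) - 1 + (q:ℝ) ^ 2 / K
          = ((∏ i ∈ Finset.range q, (1 + x i)) - 1 - S) + (S + (q:ℝ) ^ 2 / K) := by ring
      rw [e]; exact abs_add_le _ _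
    have est := aux_prod_est (Finset.range q) x
    have hab : A ^ 2 * B ≤ (2 * (q:ℝ) ^ 2 / K) ^ 2 * 2 ^ q := by
      refine mul_le_mul (pow_le_pow_left₀ hA0 hA 2) hB hB0 (by positivity)
    calc |(∏ i ∈ Finset.range q, (1 + x i)) - 1 + (q:ℝ) ^ 2 / K|
        ≤ |(∏ i ∈ Finset.range q, (1 + x i)) - 1 - S| + |S + (q:ℝ) ^ 2 / K| := tri
      _ ≤ A ^ 2 * B + 2 * (q:ℝ) ^ 3 / K ^ 2 := add_le_add est hSbound
      _ ≤ (2 * (q:ℝ) ^ 2 / K) ^ 2 * 2 ^ q + 2 * (q:ℝ) ^ 3 / K ^ 2 :=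
          add_le_add_left hab _
      _ = (4 * (q:ℝ) ^ 4 * 2 ^ q + 2 * (q:ℝ) ^ 3) / K ^ 2 := by
          field_simp; ring
  calc ((q:ℝ) + 1) ^ 2 / K * |(∏ i ∈ Finset.range q, (1 + x i)) - 1 + (q:ℝ) ^ 2 / K|
      ≤ ((q:ℝ) + 1) ^ 2 / K * ((4 * (q:ℝ) ^ 4 * 2 ^ q + 2 * (q:ℝ) ^ 3) / K ^ 2) :=
        mul_le_mul_of_nonneg_left hmid (by positivity)
    _ = ((q:ℝ) + 1) ^ 2 * (4 * (q:ℝ) ^ 4 * 2 ^ q + 2 * (q:ℝ) ^ 3) / K ^ 3 := by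
        ring
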